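/- Let G be a bipartite graph with partite sets X and Y such that for every subset S of X, |N_G(S)| ≥ (3/2)|S|. Then G has a subgraph H covering X (i.e., X ⊆ V(H)) such that every vertex x ∈ X has degree exactly 2 in H and every vertex y ∈ Y has degree at most 2 in H. -/

import Mathlib

open SimpleGraph

/-- Hall-type covering lemma for bipartite graphs. -/
theorem stmt_0 {V : Type*} [Fintype V] (G : SimpleGraph V) (X Y : Set V)
    (hdisj : Disjoint X Y) (hcover : X ∪ Y = Set.univ)
    (hbip : ∀ a b, G.Adj a b → (a ∈ X ∧ b ∈ Y) ∨ (a ∈ Y ∧ b ∈ X))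
    (hHall : ∀ S : Set V, S ⊆ X →
      3 * S.ncard ≤ 2 * {y | ∃ x ∈ S, G.Adj x y}.ncard) :
    ∃ H : G.Subgraph, X ⊆ H.verts ∧
      (∀ x ∈ X, (H.neighborSet x).ncard = 2) ∧
      (∀ y ∈ Y, (H.neighborSet y).ncard ≤ 2) := by
  classical
  -- the Hall system: each x ∈ X has three slots, each possible target y has two slots
  set t : ↥X × Fin 3 → Finset (V × Fin 2) :=
    fun p => (G.neighborSet (p.1 : V)).toFinset ×ˢ (Finset.univ : Finset (Fin 2)) with ht
  have hall : ∀ s : Finset (↥X × Fin 3), s.card ≤ (s.biUnion t).card := by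
    intro s
    set S : Finset V := s.image (fun p => ((p.1 : V))) with hS
    have hSX : (S : Set V) ⊆ X := by
      intro v hv
      simp only [hS, Finset.coe_image, Set.mem_image] at hv
      obtain ⟨p, -, rfl⟩ := hv
      exact p.1.2
    have h1 : s.card ≤ 3 * S.card := by
      rw [Finset.card_eq_sum_card_image (fun p => ((p.1 : V))) s]
      calc ∑ b ∈ S, (s.filter fun a => (a.1 : V) = b).card
          ≤ ∑ _b ∈ S, 3 := by
            refine Finset.sum_le_sum fun b _ => ?_
            have : (s.filter fun a => (a.1 : V) = b).card ≤
                (Finset.univ : Finset (Fin 3)).card := by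
              refine Finset.card_le_card_of_injOn (fun p => p.2)
                (fun _ _ => Finset.mem_univ _) ?_
              intro p hp q hq hpq
              simp only [Finset.mem_coe, Finset.mem_filter] at hp hq
              have h1 : (p.1 : V) = (q.1 : V) := by rw [hp.2, hq.2]
              exact Prod.ext (Subtype.ext h1) hpq
            simpa using this
        _ = 3 * S.card := by rw [Finset.sum_const, smul_eq_mul, mul_comm]
    have hbi : s.biUnion t = {y | ∃ x ∈ (S : Set V), G.Adj x y}.toFinset ×ˢ
        (Finset.univ : Finset (Fin 2)) := by
      ext ⟨y, j⟩
      simp only [Finset.mem_biUnion, ht, Finset.mem_product, Set.mem_toFinset,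
        Set.mem_setOf_eq, mem_neighborSet, Finset.mem_univ, and_true, hS,
        Finset.coe_image, Set.mem_image, Finset.mem_coe]
      constructor
      · rintro ⟨p, hp, hadj⟩
        exact ⟨(p.1 : V), ⟨p, hp, rfl⟩, hadj⟩
      · rintro ⟨x, ⟨p, hp, rfl⟩, hadj⟩
        exact ⟨p, hp, hadj⟩
    have h2 : 3 * S.card ≤ (s.biUnion t).card := by
      have := hHall (S : Set V) hSX
      rw [Set.ncard_coe_finset] at this
      rw [hbi, Finset.card_product, Finset.card_univ, Fintype.card_fin]
      rwa [Set.ncard_eq_toFinset_card' {y | ∃ x ∈ (S : Set V), G.Adj x y},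
        mul_comm 2] at this
    exact h1.trans h2
  obtain ⟨f, hfinj, hft⟩ := (Finset.all_card_le_biUnion_card_iff_exists_injective t).mp hall
  have hadj : ∀ (x : ↥X) (i : Fin 3), G.Adj (x : V) (f (x, i)).1 := by
    intro x i
    have := hft (x, i)
    simp only [ht, Finset.mem_product, Set.mem_toFinset, mem_neighborSet] at this
    exact this.1
  -- each x has two distinct target vertices among its three slots
  have hne : ∀ x : ↥X, ∃ i j : Fin 3, (f (x, i)).1 ≠ (f (x, j)).1 := by
    intro x
    by_contra h
    push_neg at h
    have hinj2 : Function.Injective (fun i : Fin 3 => (f (x, i)).2) := by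
      intro i j hij
      have h1 : f (x, i) = f (x, j) := Prod.ext (h i j) hij
      exact (Prod.ext_iff.mp (hfinj h1)).2
    have := Fintype.card_le_of_injective _ hinj2
    simp at this
  choose i1 i2 hi12 using hne
  set y1 : ↥X → V := fun x => (f (x, i1 x)).1 with hy1
  set y2 : ↥X → V := fun x => (f (x, i2 x)).1 with hy2
  have hy12 : ∀ x, y1 x ≠ y2 x := hi12
  have hadj1 : ∀ x : ↥X, G.Adj (x : V) (y1 x) := fun x => hadj x (i1 x)
  have hadj2 : ∀ x : ↥X, G.Adj (x : V) (y2 x) := fun x => hadj x (i2 x)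
  have hyY : ∀ x : ↥X, y1 x ∈ Y ∧ y2 x ∈ Y := by
    intro x
    constructor
    · rcases hbip _ _ (hadj1 x) with h | h
      · exact h.2
      · exact absurd x.2 (Set.disjoint_right.mp hdisj h.1)
    · rcases hbip _ _ (hadj2 x) with h | h
      · exact h.2
      · exact absurd x.2 (Set.disjoint_right.mp hdisj h.1)
  -- define the subgraph
  set H : G.Subgraph :=
    { verts := Set.univ
      Adj := fun a b => (∃ ha : a ∈ X, b = y1 ⟨a, ha⟩ ∨ b = y2 ⟨a, ha⟩) ∨
        (∃ hb : b ∈ X, a = y1 ⟨b, hb⟩ ∨ a = y2 ⟨b, hb⟩)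
      adj_sub := by
        rintro a b (⟨ha, rfl | rfl⟩ | ⟨hb, rfl | rfl⟩)
        · exact hadj1 ⟨a, ha⟩
        · exact hadj2 ⟨a, ha⟩
        · exact (hadj1 ⟨b, hb⟩).symm
        · exact (hadj2 ⟨b, hb⟩).symm
      edge_vert := fun _ => Set.mem_univ _
      symm := ⟨fun a b h => h.symm.imp id id⟩ } with hH
  have hHadj : ∀ a b, H.Adj a b ↔ ((∃ ha : a ∈ X, b = y1 ⟨a, ha⟩ ∨ b = y2 ⟨a, ha⟩) ∨
      (∃ hb : b ∈ X, a = y1 ⟨b, hb⟩ ∨ a = y2 ⟨b, hb⟩)) := fun a b => Iff.rfl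
  refine ⟨H, ?_, ?_, ?_⟩
  · exact fun _ _ => Set.mem_univ _
  · -- degree of x ∈ X is exactly 2
    intro x hx
    have : H.neighborSet x = {y1 ⟨x, hx⟩, y2 ⟨x, hx⟩} := by
      ext b
      simp only [Subgraph.mem_neighborSet, hHadj, Set.mem_insert_iff, Set.mem_singleton_iff]
      constructor
      · rintro (⟨ha, h⟩ | ⟨hb, h⟩)
        · exact h
        · exfalso
          have hxY : x ∈ Y := by
            rcases h with rfl | rfl
            · exact (hyY ⟨b, hb⟩).1
            · exact (hyY ⟨b, hb⟩).2
          exact Set.disjoint_left.mp hdisj hx hxY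
      · intro h
        exact Or.inl ⟨hx, h⟩
    rw [this]
    exact Set.ncard_pair (hy12 ⟨x, hx⟩)
  · -- degree of y ∈ Y is at most 2
    intro y hy
    have hsub : H.neighborSet y ⊆
        {b | ∃ hb : b ∈ X, y = y1 ⟨b, hb⟩ ∨ y = y2 ⟨b, hb⟩} := by
      intro b hb
      simp only [Subgraph.mem_neighborSet, hHadj] at hb
      rcases hb with ⟨ha, h⟩ | h
      · exact absurd ha (fun ha => Set.disjoint_left.mp hdisj ha hy)
      · exact h
    have hcard : {b | ∃ hb : b ∈ X, y = y1 ⟨b, hb⟩ ∨ y = y2 ⟨b, hb⟩}.ncard ≤ 2 := by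
      have := Set.ncard_le_ncard_of_injOn
        (s := {b | ∃ hb : b ∈ X, y = y1 ⟨b, hb⟩ ∨ y = y2 ⟨b, hb⟩})
        (t := (Set.univ : Set (Fin 2)))
        (fun b => if hb : ∃ hb : b ∈ X, y = y1 ⟨b, hb⟩
          then (f (⟨b, hb.choose⟩, i1 ⟨b, hb.choose⟩)).2
          else if hb' : b ∈ X then (f (⟨b, hb'⟩, i2 ⟨b, hb'⟩)).2 else 0)
        (fun _ _ => Set.mem_univ _) ?_ (Set.finite_univ)
      · simpa [Set.ncard_univ] using this
      · intro a ha b hb hab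
        simp only [Set.mem_setOf_eq] at ha hb
        obtain ⟨haX, ha'⟩ := ha
        obtain ⟨hbX, hb'⟩ := hb
        -- show f at the relevant slots coincide
        have key : ∀ c (hcX : c ∈ X) (hc : y = y1 ⟨c, hcX⟩ ∨ y = y2 ⟨c, hcX⟩),
            ∃ ic : Fin 3, (f (⟨c, hcX⟩, ic)).1 = y ∧
              (if hcc : ∃ hcc : c ∈ X, y = y1 ⟨c, hcc⟩
                then (f (⟨c, hcc.choose⟩, i1 ⟨c, hcc.choose⟩)).2
                else if hc' : c ∈ X then (f (⟨c, hc'⟩, i2 ⟨c, hc'⟩)).2 else 0)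
                = (f (⟨c, hcX⟩, ic)).2 := by
          intro c hcX hc
          by_cases h1 : ∃ hcc : c ∈ X, y = y1 ⟨c, hcc⟩
          · refine ⟨i1 ⟨c, hcX⟩, ?_, ?_⟩
            · exact (h1.choose_spec).symm
            · simp only [dif_pos h1]
          · have h2 : y = y2 ⟨c, hcX⟩ := by
              rcases hc with h | h
              · exact absurd ⟨hcX, h⟩ h1
              · exact h
            refine ⟨i2 ⟨c, hcX⟩, h2.symm, ?_⟩
            rw [dif_neg h1, dif_pos hcX]
        obtain ⟨ia, hia1, hia2⟩ := key a haX ha'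
        obtain ⟨ib, hib1, hib2⟩ := key b hbX hb'
        dsimp only at hab
        rw [hia2, hib2] at hab
        have : f (⟨a, haX⟩, ia) = f (⟨b, hbX⟩, ib) := by
          apply Prod.ext
          · rw [hia1, hib1]
          · exact hab
        have := hfinj this
        exact congrArg (fun p => (p.1 : V)) (Prod.ext_iff.mp this).1
    exact (Set.ncard_le_ncard hsub (Set.toFinite _)).trans hcard
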